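/- Let λ(k) = C₀ k^α with C₀ > 0 and α ≥ 4 an even integer. Then for δ > 0 the function F(k) := 1/(λ(k) − λ(k+δ)) + 1/(λ(k) − λ(k−δ)) satisfies F''(0) = −2C₀⁻¹α(α+1)δ^{−α−2}; in particular F''(0) ≠ 0 for every δ > 0. -/

import Mathlib

open Filter Topology

lemma hasDerivAt_P (C₀ c : ℝ) (α : ℕ) (x : ℝ) :
    HasDerivAt (fun k : ℝ => C₀ * k ^ α - C₀ * (k + c) ^ α)
      (C₀ * (α * x ^ (α - 1)) - C₀ * (α * (x + c) ^ (α - 1))) x := by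
  have h1 : HasDerivAt (fun k : ℝ => k ^ α) (α * x ^ (α - 1)) x := hasDerivAt_pow α x
  have h2 : HasDerivAt (fun k : ℝ => k + c) 1 x := (hasDerivAt_id x).add_const c
  have h3 := h2.pow α
  simpa using (h1.const_mul C₀).fun_sub (h3.const_mul C₀)

lemma hasDerivAt_Pm (C₀ c : ℝ) (α : ℕ) (x : ℝ) :
    HasDerivAt (fun k : ℝ => C₀ * k ^ α - C₀ * (k - c) ^ α)
      (C₀ * (α * x ^ (α - 1)) - C₀ * (α * (x - c) ^ (α - 1))) x := by
  have h1 : HasDerivAt (fun k : ℝ => k ^ α) (α * x ^ (α - 1)) x := hasDerivAt_pow α x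
  have h2 : HasDerivAt (fun k : ℝ => k - c) 1 x := (hasDerivAt_id x).sub_const c
  have h3 := h2.pow α
  simpa using (h1.const_mul C₀).fun_sub (h3.const_mul C₀)

lemma hasDerivAt_P' (C₀ c : ℝ) (α : ℕ) (x : ℝ) :
    HasDerivAt (fun k : ℝ => C₀ * (α * k ^ (α - 1)) - C₀ * (α * (k + c) ^ (α - 1)))
      (C₀ * (α * ((α - 1 : ℕ) * x ^ (α - 1 - 1))) -
        C₀ * (α * ((α - 1 : ℕ) * (x + c) ^ (α - 1 - 1)))) x := by
  have h1 : HasDerivAt (fun k : ℝ => k ^ (α - 1)) ((α - 1 : ℕ) * x ^ (α - 1 - 1)) x :=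
    hasDerivAt_pow (α - 1) x
  have h2 : HasDerivAt (fun k : ℝ => k + c) 1 x := (hasDerivAt_id x).add_const c
  have h3 := h2.pow (α - 1)
  simpa [mul_assoc, mul_comm, mul_left_comm] using
    ((h1.const_mul (α : ℝ)).const_mul C₀).fun_sub (((h3.const_mul (α : ℝ)).const_mul C₀))

lemma hasDerivAt_Pm' (C₀ c : ℝ) (α : ℕ) (x : ℝ) :
    HasDerivAt (fun k : ℝ => C₀ * (α * k ^ (α - 1)) - C₀ * (α * (k - c) ^ (α - 1)))
      (C₀ * (α * ((α - 1 : ℕ) * x ^ (α - 1 - 1))) -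
        C₀ * (α * ((α - 1 : ℕ) * (x - c) ^ (α - 1 - 1)))) x := by
  have h1 : HasDerivAt (fun k : ℝ => k ^ (α - 1)) ((α - 1 : ℕ) * x ^ (α - 1 - 1)) x :=
    hasDerivAt_pow (α - 1) x
  have h2 : HasDerivAt (fun k : ℝ => k - c) 1 x := (hasDerivAt_id x).sub_const c
  have h3 := h2.pow (α - 1)
  simpa [mul_assoc, mul_comm, mul_left_comm] using
    ((h1.const_mul (α : ℝ)).const_mul C₀).fun_sub (((h3.const_mul (α : ℝ)).const_mul C₀))

lemma hasDerivAt_inv_P (C₀ c : ℝ) (α : ℕ) (x : ℝ)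
    (hx : C₀ * x ^ α - C₀ * (x + c) ^ α ≠ 0) :
    HasDerivAt (fun k : ℝ => 1 / (C₀ * k ^ α - C₀ * (k + c) ^ α))
      (-(C₀ * (α * x ^ (α - 1)) - C₀ * (α * (x + c) ^ (α - 1))) /
        (C₀ * x ^ α - C₀ * (x + c) ^ α) ^ 2) x := by
  simpa [one_div] using (hasDerivAt_P C₀ c α x).fun_inv hx

lemma hasDerivAt_inv_Pm (C₀ c : ℝ) (α : ℕ) (x : ℝ)
    (hx : C₀ * x ^ α - C₀ * (x - c) ^ α ≠ 0) :
    HasDerivAt (fun k : ℝ => 1 / (C₀ * k ^ α - C₀ * (k - c) ^ α))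
      (-(C₀ * (α * x ^ (α - 1)) - C₀ * (α * (x - c) ^ (α - 1))) /
        (C₀ * x ^ α - C₀ * (x - c) ^ α) ^ 2) x := by
  simpa [one_div] using (hasDerivAt_Pm C₀ c α x).fun_inv hx

theorem stmt3 (C₀ : ℝ) (α : ℕ) (δ : ℝ)
    (hC₀ : 0 < C₀) (hα : 4 ≤ α) (heven : Even α) (hδ : 0 < δ) :
    deriv (deriv fun k : ℝ =>
        1 / (C₀ * k ^ α - C₀ * (k + δ) ^ α) + 1 / (C₀ * k ^ α - C₀ * (k - δ) ^ α)) 0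
      = -2 * C₀⁻¹ * (α : ℝ) * ((α : ℝ) + 1) / δ ^ (α + 2) ∧
    -2 * C₀⁻¹ * (α : ℝ) * ((α : ℝ) + 1) / δ ^ (α + 2) ≠ 0 := by
  have hC₀' : C₀ ≠ 0 := ne_of_gt hC₀
  have hδ' : δ ≠ 0 := ne_of_gt hδ
  obtain ⟨m, rfl⟩ : ∃ m, α = m + 4 := ⟨α - 4, by omega⟩
  have hm : Even m := by rcases heven with ⟨r, hr⟩; exact ⟨r - 2, by omega⟩
  set α := m + 4 with hαdef
  have hz : (0:ℝ) ^ α = 0 := zero_pow (by omega)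
  have e2 : ((0:ℝ) - δ) ^ α = δ ^ α := by rw [zero_sub, heven.neg_pow]
  have hp0 : C₀ * (0:ℝ) ^ α - C₀ * ((0:ℝ) + δ) ^ α ≠ 0 := by
    rw [hz, zero_add]
    have : (0:ℝ) < C₀ * δ ^ α := by positivity
    intro h; nlinarith
  have hq0 : C₀ * (0:ℝ) ^ α - C₀ * ((0:ℝ) - δ) ^ α ≠ 0 := by
    rw [hz, e2]
    have : (0:ℝ) < C₀ * δ ^ α := by positivity
    intro h; nlinarith
  -- denominators nonzero near 0
  have hcp : Continuous fun x : ℝ => C₀ * x ^ α - C₀ * (x + δ) ^ α := by continuity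
  have hcq : Continuous fun x : ℝ => C₀ * x ^ α - C₀ * (x - δ) ^ α := by continuity
  have hp : ∀ᶠ x in 𝓝 (0:ℝ), C₀ * x ^ α - C₀ * (x + δ) ^ α ≠ 0 :=
    hcp.continuousAt.eventually_ne hp0
  have hq : ∀ᶠ x in 𝓝 (0:ℝ), C₀ * x ^ α - C₀ * (x - δ) ^ α ≠ 0 :=
    hcq.continuousAt.eventually_ne hq0
  -- first derivative formula near 0
  have hder : (deriv fun k : ℝ =>
      1 / (C₀ * k ^ α - C₀ * (k + δ) ^ α) + 1 / (C₀ * k ^ α - C₀ * (k - δ) ^ α))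
      =ᶠ[𝓝 (0:ℝ)] fun x =>
        -(C₀ * (α * x ^ (α - 1)) - C₀ * (α * (x + δ) ^ (α - 1))) /
          (C₀ * x ^ α - C₀ * (x + δ) ^ α) ^ 2 +
        -(C₀ * (α * x ^ (α - 1)) - C₀ * (α * (x - δ) ^ (α - 1))) /
          (C₀ * x ^ α - C₀ * (x - δ) ^ α) ^ 2 := by
    filter_upwards [hp, hq] with x hx1 hx2
    exact ((hasDerivAt_inv_P C₀ δ α x hx1).add (hasDerivAt_inv_Pm C₀ δ α x hx2)).deriv
  rw [hder.deriv_eq]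
  -- second derivative at 0
  have hP := hasDerivAt_P C₀ δ α 0
  have hPm := hasDerivAt_Pm C₀ δ α 0
  have hP' := hasDerivAt_P' C₀ δ α 0
  have hPm' := hasDerivAt_Pm' C₀ δ α 0
  have hsq : (C₀ * (0:ℝ) ^ α - C₀ * ((0:ℝ) + δ) ^ α) ^ 2 ≠ 0 := pow_ne_zero 2 hp0
  have hsqm : (C₀ * (0:ℝ) ^ α - C₀ * ((0:ℝ) - δ) ^ α) ^ 2 ≠ 0 := pow_ne_zero 2 hq0
  have hD := (hP'.fun_neg.fun_div (hP.fun_pow 2) hsq).fun_add (hPm'.fun_neg.fun_div (hPm.fun_pow 2) hsqm)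
  rw [hD.deriv]
  have h1 : α - 1 = m + 3 := by omega
  have h2 : α - 1 - 1 = m + 2 := by omega
  have hodd : Odd (m + 3) := by rcases hm with ⟨r, rfl⟩; exact ⟨r + 1, by ring⟩
  have hev2 : Even (m + 2) := by rcases hm with ⟨r, rfl⟩; exact ⟨r + 1, by ring⟩
  have z1 : (0:ℝ) ^ (m + 3) = 0 := zero_pow (by omega)
  have z2 : (0:ℝ) ^ (m + 2) = 0 := zero_pow (by omega)
  have z3 : (0:ℝ) ^ (m + 4) = 0 := zero_pow (by omega)
  have n1 : (-δ) ^ (m + 3) = -δ ^ (m + 3) := hodd.neg_pow δ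
  have n2 : (-δ) ^ (m + 2) = δ ^ (m + 2) := hev2.neg_pow δ
  have n3 : (-δ) ^ (m + 4) = δ ^ (m + 4) := heven.neg_pow δ
  constructor
  · rw [h2, h1, hαdef]
    simp only [zero_add, zero_sub, z1, z2, z3, n1, n2, n3, mul_zero, zero_mul, sub_zero,
      zero_sub, neg_neg, pow_one]
    push_cast
    field_simp
    ring
  · have hα4 : (4:ℝ) ≤ (α:ℝ) := by exact_mod_cast hα
    have hinv : (0:ℝ) < C₀⁻¹ := inv_pos.2 hC₀
    have hαpos : (0:ℝ) < (α:ℝ) := by linarith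
    have hpos : (0:ℝ) < 2 * C₀⁻¹ * (α:ℝ) * ((α:ℝ) + 1) :=
      mul_pos (mul_pos (mul_pos two_pos hinv) hαpos) (by linarith)
    have hnum : -2 * C₀⁻¹ * (α:ℝ) * ((α:ℝ) + 1) < 0 := by nlinarith [hpos]
    exact ne_of_lt (div_neg_of_neg_of_pos hnum (pow_pos hδ _))
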